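/- Let (G,≾) be a compatible quasi-ordered abelian group in which ≾ is antisymmetric (i.e. ≾ is a total order). If G contains an element g of order 2 (g ≠ 0 and g + g = 0), then G = {0, g}; in particular G is isomorphic to ℤ/2ℤ. -/

import Mathlib

universe u

variable {G : Type u} [AddCommGroup G]

/-- `r` is a total quasi-order: reflexive, transitive, any two elements comparable. -/
def TotalQO (r : G → G → Prop) : Prop :=
  (∀ x, r x x) ∧ (∀ x y z, r x y → r y z → r x z) ∧ (∀ x y, r x y ∨ r y x)

/-- Axiom (Q1): `x ∼ 0 → x = 0`. -/
def AxQ1 (r : G → G → Prop) : Prop := ∀ x, r x 0 → r 0 x → x = 0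

/-- Axiom (Q2): `x ≾ y ∧ ¬(y ∼ z) → x + z ≾ y + z`. -/
def AxQ2 (r : G → G → Prop) : Prop :=
  ∀ x y z, r x y → ¬(r y z ∧ r z y) → r (x + z) (y + z)

/-- A compatible quasi-ordered abelian group: a total quasi-order satisfying (Q1) and (Q2). -/
def Compatible (r : G → G → Prop) : Prop := TotalQO r ∧ AxQ1 r ∧ AxQ2 r

/-- `g` is o-type: its `∼`-class is a singleton and `g` does not have order 2. -/
def OType (r : G → G → Prop) (g : G) : Prop :=
  (∀ h, r h g → r g h → h = g) ∧ (g + g = 0 → g = 0)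

/-- `g` is v-type: its `∼`-class is not a singleton, or `g + g = 0`. -/
def VType (r : G → G → Prop) (g : G) : Prop :=
  (∃ h, h ≠ g ∧ r h g ∧ r g h) ∨ g + g = 0

/-- if `≾` is a compatible quasi-order which is antisymmetric
(i.e. a total order) and `G` has an element `g` of order 2, then
`G = {0, g}`; in particular `G ≃ ℤ/2ℤ`. -/
theorem order_two_element_gives_zmod_two (r : G → G → Prop) (hc : Compatible r)
    (hanti : ∀ x y, r x y → r y x → x = y)
    (g : G) (hg : g ≠ 0) (hg2 : g + g = 0) :
    (∀ h : G, h = 0 ∨ h = g) ∧ Nonempty (G ≃+ ZMod 2) := by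
  classical
  obtain ⟨⟨hrefl, htrans, htot⟩, hq1, hq2⟩ := hc
  have key : ∀ h : G, h = 0 ∨ h = g := by
    intro h
    by_contra hcon
    push_neg at hcon
    obtain ⟨h0, hgne⟩ := hcon
    rcases htot 0 g with h0g | hg0
    · -- 0 ≾ g, z ≾ g + z for z ≠ g
      have step : ∀ z : G, z ≠ g → r z (g + z) := by
        intro z hz
        have := hq2 0 g z h0g (fun hs => hz (hanti _ _ hs.2 hs.1))
        simpa using this
      have h1 : r h (g + h) := step h hgne
      have h2 : r (g + h) h := by
        have := step (g + h) (by
          intro he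
          apply h0
          have : g + h + -g = g + -g := by rw [he]
          simpa [add_comm, add_assoc] using this)
        have e : g + (g + h) = h := by rw [← add_assoc, hg2, zero_add]
        rwa [e] at this
      have : h = g + h := hanti _ _ h1 h2
      exact hg (add_right_cancel (this.symm.trans (zero_add h).symm))
    · -- g ≾ 0, g + z ≾ z for z ≠ 0
      have step : ∀ z : G, z ≠ 0 → r (g + z) z := by
        intro z hz
        have := hq2 g 0 z hg0 (fun hs => hz (hanti _ _ hs.1 hs.2).symm)
        simpa using this
      have h1 : r (g + h) h := step h h0
      have h2 : r h (g + h) := by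
        have := step (g + h) (by
          intro he
          apply hgne
          have : g + (g + h) = g + 0 := by rw [he]
          rw [← add_assoc, hg2, zero_add, add_zero] at this
          rw [this])
        have e : g + (g + h) = h := by rw [← add_assoc, hg2, zero_add]
        rwa [e] at this
      have : h = g + h := hanti _ _ h2 h1
      exact hg (add_right_cancel (this.symm.trans (zero_add h).symm))
  refine ⟨key, ⟨⟨⟨fun h => if h = 0 then 0 else 1, fun n => if n = 0 then 0 else g, ?_, ?_⟩, ?_⟩⟩⟩
  · intro h
    rcases key h with rfl | rfl
    · simp
    · simp [hg, (by decide : (1 : ZMod 2) ≠ 0)]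
  · intro n
    fin_cases n
    · show (if (if (0 : ZMod 2) = 0 then 0 else g) = 0 then 0 else 1) = (0 : ZMod 2)
      simp
    · show (if (if (1 : ZMod 2) = 0 then 0 else g) = 0 then 0 else 1) = (1 : ZMod 2)
      simp [hg, (by decide : (1 : ZMod 2) ≠ 0)]
  · intro a b
    rcases key a with rfl | rfl <;> rcases key b with rfl | rfl <;>
      simp [hg, hg2] <;> decide
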